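/- Let G be a connected simple graph and let F be a spanning tree of G. A vertex y is a cutvertex of G if and only if there exist two distinct vertices x and z that are both adjacent to y in F and are not biconnected in G. -/

import Mathlib

/-- Two vertices `a` and `b` of a simple graph `H` are *biconnected* in `H` if `a ≠ b` and
there exist two distinct paths from `a` to `b` in `H` whose only common vertices are
`a` and `b`. -/
def Biconnected {V : Type*} (H : SimpleGraph V) (a b : V) : Prop :=
  a ≠ b ∧ ∃ p q : H.Path a b, p ≠ q ∧
    ∀ x, x ∈ p.1.support → x ∈ q.1.support → (x = a ∨ x = b)

/-- The graph obtained from `H` by deleting the vertex `c` and all edges incident to it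
(keeping the same vertex type). -/
def removeVertex {V : Type*} (H : SimpleGraph V) (c : V) : SimpleGraph V where
  Adj a b := H.Adj a b ∧ a ≠ c ∧ b ≠ c
  symm := by
    constructor
    intro a b h
    exact ⟨h.1.symm, h.2.2, h.2.1⟩
  loopless := by
    constructor
    intro a h
    exact (H.ne_of_adj h.1) rfl

/-- A vertex `c` of a graph `H` is a *cutvertex* if there exist vertices `a, b ≠ c` that
are connected in `H` but not in the graph obtained from `H` by deleting `c`. -/
def IsCutVertex {V : Type*} (H : SimpleGraph V) (c : V) : Prop :=
  ∃ a b : V, a ≠ c ∧ b ≠ c ∧ H.Reachable a b ∧ ¬ (removeVertex H c).Reachable a b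


open SimpleGraph


/-- A walk in `removeVertex G y` starting at a vertex other than `y` avoids `y`. -/
lemma remove_walk_avoids {V : Type*} {G : SimpleGraph V} {y u v : V}
    (w : (removeVertex G y).Walk u v) (hu : u ≠ y) : y ∉ w.support := by
  induction w with
  | nil => simpa using fun h => hu h.symm
  | cons h w ih =>
    simp only [SimpleGraph.Walk.support_cons, List.mem_cons]
    rintro (rfl | hy)
    · exact hu rfl
    · exact ih h.2.2 hy

/-- A walk in `H ≤ G` avoiding `y` gives reachability in `removeVertex G y`. -/
lemma reach_remove {V : Type*} {H G : SimpleGraph V} (hle : H ≤ G) {y u v : V}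
    (w : H.Walk u v) (hy : y ∉ w.support) : (removeVertex G y).Reachable u v := by
  induction w with
  | nil => exact Reachable.refl _
  | cons h w ih =>
    simp only [SimpleGraph.Walk.support_cons, List.mem_cons, not_or] at hy
    exact (SimpleGraph.Adj.reachable
      (show (removeVertex G y).Adj _ _ from
        ⟨hle h, fun hc => hy.1 hc.symm,
          fun hc => hy.2 (hc ▸ SimpleGraph.Walk.start_mem_support w)⟩)).trans
      (ih hy.2)

/-- Let `G` be a connected simple graph and let `F` be a spanning tree of `G`. A vertex `y`
is a cutvertex of `G` if and only if there exist two distinct vertices `x` and `z` that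
are both adjacent to `y` in `F` and are not biconnected in `G`. -/
theorem cutvertex_iff_tree_neighbors_not_biconnected {V : Type*}
    (G F : SimpleGraph V) (hG : G.Connected)
    (hFG : F ≤ G) (hacyc : F.IsAcyclic) (hFconn : F.Connected) (y : V) :
    IsCutVertex G y ↔
      ∃ x z : V, x ≠ z ∧ F.Adj y x ∧ F.Adj y z ∧ ¬ Biconnected G x z := by
  classical
  constructor
  · rintro ⟨a, b, hay, hby, _, hnr⟩
    -- take the F-path from a to b
    obtain ⟨w0⟩ := hFconn.preconnected a b
    set p := w0.toPath with hp
    have hpath : (p : F.Walk a b).IsPath := p.2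
    have hy : y ∈ (p : F.Walk a b).support := by
      by_contra hy
      exact hnr (reach_remove hFG (p : F.Walk a b) hy)
    set t := (p : F.Walk a b).takeUntil y hy with ht
    set d := (p : F.Walk a b).dropUntil y hy with hd
    have htp : t.IsPath := hpath.takeUntil hy
    have hdp : d.IsPath := hpath.dropUntil hy
    have hrp : t.reverse.IsPath := htp.reverse
    obtain ⟨x, hyx, w1, hw1⟩ := t.reverse.exists_eq_cons_of_ne (Ne.symm hay) 
    obtain ⟨z, hyz, w2, hw2⟩ := d.exists_eq_cons_of_ne (Ne.symm hby)
    have hyw1 : y ∉ w1.support := by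
      have := hrp
      rw [hw1, Walk.cons_isPath_iff] at this
      exact this.2
    have hyw2 : y ∉ w2.support := by
      have := hdp
      rw [hw2, Walk.cons_isPath_iff] at this
      exact this.2
    have hxz : x ≠ z := by
      have hnd := hpath.2
      rw [← (p : F.Walk a b).take_spec hy, Walk.support_append, List.nodup_append] at hnd
      intro h
      exact hnd.2.2 x
        (by
          have h1 : x ∈ t.reverse.support := by rw [hw1]; simp
          rw [Walk.support_reverse, List.mem_reverse] at h1
          rwa [ht] at h1) x
        (by
          rw [h, ← hd, hw2]
          simp) rfl
    refine ⟨x, z, hxz, hyx, hyz, ?_⟩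
    rintro ⟨_, p1, p2, _, hint⟩
    -- one of p1, p2 avoids y
    have hxy : x ≠ y := hyx.symm.ne
    have hzy : z ≠ y := hyz.symm.ne
    have : ∃ q : G.Walk x z, y ∉ q.support := by
      by_cases h1 : y ∈ (p1 : G.Walk x z).support
      · refine ⟨p2, fun h2 => ?_⟩
        rcases hint y h1 h2 with rfl | rfl
        · exact hxy rfl
        · exact hzy rfl
      · exact ⟨p1, h1⟩
    obtain ⟨q, hq⟩ := this
    have r1 : (removeVertex G y).Reachable a x := by
      have : y ∉ w1.reverse.support := by
        rwa [Walk.support_reverse, List.mem_reverse]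
      exact reach_remove hFG w1.reverse this
    have r2 : (removeVertex G y).Reachable x z := reach_remove le_rfl q hq
    have r3 : (removeVertex G y).Reachable z b := reach_remove hFG w2 hyw2
    exact hnr ((r1.trans r2).trans r3)
  · rintro ⟨x, z, hxz, hyx, hyz, hnb⟩
    refine ⟨x, z, hyx.symm.ne, hyz.symm.ne, hG.preconnected x z, fun hr => ?_⟩
    obtain ⟨w⟩ := hr
    have hyw : y ∉ w.support := remove_walk_avoids w hyx.symm.ne
    have hrem : removeVertex G y ≤ G := fun a b h => h.1
    have hsub : ∀ e ∈ w.edges, e ∈ G.edgeSet := fun e he =>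
      edgeSet_mono hrem (w.edges_subset_edgeSet he)
    set gw := w.transfer G hsub with hgw
    have hygw : y ∉ gw.support := by rwa [hgw, Walk.support_transfer]
    set p1 := gw.toPath with hp1
    have hyp1 : y ∉ (p1 : G.Walk x z).support := fun h =>
      hygw (gw.support_toPath_subset h)
    -- the path x - y - z
    have hxy : G.Adj x y := hFG hyx.symm
    have hyzG : G.Adj y z := hFG hyz
    have hp2path : (Walk.cons hxy (Walk.cons hyzG Walk.nil)).IsPath := by
      rw [Walk.cons_isPath_iff, Walk.cons_isPath_iff]
      refine ⟨⟨Walk.IsPath.nil, ?_⟩, ?_⟩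
      · simpa using hyz.ne
      · simpa using ⟨hyx.symm.ne, hxz⟩
    refine hnb ⟨hxz, p1, ⟨_, hp2path⟩, ?_, ?_⟩
    · intro h
      apply hyp1
      rw [h]
      simp
    · intro v hv1 hv2
      simp only [Walk.support_cons, Walk.support_nil, List.mem_cons,
        List.mem_singleton] at hv2
      rcases hv2 with rfl | rfl | rfl | h
      · exact Or.inl rfl
      · exact absurd hv1 hyp1
      · exact Or.inr rfl
      · exact absurd h List.not_mem_nil
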